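/- For every pair of Lebesgue measurable sets A, B ⊆ ℝ, Θ_I(A ∩ B) = Θ_I(A) ∩ Θ_I(B). -/

import Mathlib

open MeasureTheory Set
open scoped ENNReal

/-- A nontrivial admissible ideal of subsets of ℕ. -/
structure NAIdeal where
  carrier : Set (Set ℕ)
  downward : ∀ A ∈ carrier, ∀ B, B ⊆ A → B ∈ carrier
  unionMem : ∀ A ∈ carrier, ∀ B ∈ carrier, A ∪ B ∈ carrier
  admissible : ∀ n : ℕ, {n} ∈ carrier
  nontriv : (Set.univ : Set ℕ) ∉ carrier

/-- I-limit superior of a real sequence, in the extended reals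
(sSup of the empty set is ⊥, matching the convention −∞). -/
noncomputable def Ilimsup (I : NAIdeal) (x : ℕ → ℝ) : EReal :=
  sSup ((fun b : ℝ => (b : EReal)) '' {b : ℝ | {k | x k > b} ∉ I.carrier})

/-- I-limit inferior of a real sequence, in the extended reals
(sInf of the empty set is ⊤, matching the convention +∞). -/
noncomputable def Iliminf (I : NAIdeal) (x : ℕ → ℝ) : EReal :=
  sInf ((fun a : ℝ => (a : EReal)) '' {a : ℝ | {k | x k < a} ∉ I.carrier})

/-- I-boundedness of a real sequence. -/
def IBounded (I : NAIdeal) (x : ℕ → ℝ) : Prop :=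
  ∃ M > (0 : ℝ), {k | |x k| > M} ∈ I.carrier

/-- `J` is a sequence of closed intervals about the point `p`. -/
def AboutP (p : ℝ) (J : ℕ → Set ℝ) : Prop :=
  ∀ n, p ∈ J n ∧ ∃ a b : ℝ, J n = Set.Icc a b

/-- The admissibility condition 𝒮(J) = {n : 0 < λ(Jₙ) < 1/n} ∈ F(I),
i.e. its complement lies in the ideal. -/
def AdmSeq (I : NAIdeal) (J : ℕ → Set ℝ) : Prop :=
  {n : ℕ | 0 < volume (J n) ∧ volume (J n) < 1 / (n : ℝ≥0∞)}ᶜ ∈ I.carrier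

/-- The sequence of ratios λ(Jₙ ∩ E)/λ(Jₙ). -/
noncomputable def ratioSeq (E : Set ℝ) (J : ℕ → Set ℝ) (n : ℕ) : ℝ :=
  (volume (J n ∩ E)).toReal / (volume (J n)).toReal

/-- Lower I-density of `E` at `p`. -/
noncomputable def lowerIDensity (I : NAIdeal) (p : ℝ) (E : Set ℝ) : EReal :=
  sInf {v : EReal | ∃ J : ℕ → Set ℝ, AboutP p J ∧ AdmSeq I J ∧ v = Iliminf I (ratioSeq E J)}

/-- Upper I-density of `E` at `p`. -/
noncomputable def upperIDensity (I : NAIdeal) (p : ℝ) (E : Set ℝ) : EReal :=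
  sSup {v : EReal | ∃ J : ℕ → Set ℝ, AboutP p J ∧ AdmSeq I J ∧ v = Ilimsup I (ratioSeq E J)}

/-- Θ_I(E): the set of points where `E` has lower I-density 1. -/
def Theta (I : NAIdeal) (E : Set ℝ) : Set ℝ :=
  {x : ℝ | lowerIDensity I x E = 1}

lemma NAIdeal.empty_mem (I : NAIdeal) : (∅ : Set ℕ) ∈ I.carrier :=
  I.downward {0} (I.admissible 0) ∅ (empty_subset _)

lemma ratio_le_one (E : Set ℝ) (J : ℕ → Set ℝ) (n : ℕ) : ratioSeq E J n ≤ 1 := by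
  unfold ratioSeq
  rcases eq_or_ne (volume (J n)) ∞ with h | h
  · simp [h]
  · rcases eq_or_lt_of_le (le_refl (0:ℝ)) |>.symm with _ | _
    · exact div_le_one_of_le₀ (ENNReal.toReal_mono h (measure_mono inter_subset_left))
        ENNReal.toReal_nonneg
    · exact div_le_one_of_le₀ (ENNReal.toReal_mono h (measure_mono inter_subset_left))
        ENNReal.toReal_nonneg

lemma Iliminf_le_one (I : NAIdeal) (x : ℕ → ℝ) (hx : ∀ k, x k ≤ 1) :
    Iliminf I x ≤ 1 := by
  by_contra h
  push_neg at h
  obtain ⟨a, ha1, ha2⟩ := EReal.exists_between_coe_real h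
  have h1a : (1:ℝ) < a := by exact_mod_cast ha1
  have : Iliminf I x ≤ (a : EReal) := by
    apply sInf_le
    refine ⟨a, ?_, rfl⟩
    have huniv : {k | x k < a} = univ := eq_univ_of_forall fun k => lt_of_le_of_lt (hx k) h1a
    simp only [mem_setOf_eq, huniv]
    exact I.nontriv
  exact absurd this (not_le.mpr ha2)

lemma one_le_Iliminf (I : NAIdeal) (x : ℕ → ℝ)
    (h : ∀ a : ℝ, a < 1 → {k | x k < a} ∈ I.carrier) : 1 ≤ Iliminf I x := by
  apply le_sInf
  rintro v ⟨a, ha, rfl⟩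
  have h1 : (1:ℝ) ≤ a := not_lt.mp fun hlt => ha (h a hlt)
  show (1:EReal) ≤ (a:EReal)
  exact_mod_cast h1

lemma small_mem_of_Iliminf_eq_one (I : NAIdeal) (x : ℕ → ℝ) (hx : Iliminf I x = 1)
    {b : ℝ} (hb : b < 1) : {k | x k < b} ∈ I.carrier := by
  by_contra hmem
  have h1 : Iliminf I x ≤ (b : EReal) := sInf_le ⟨b, hmem, rfl⟩
  rw [hx] at h1
  exact absurd h1 (not_le.mpr (by exact_mod_cast hb))

lemma Iliminf_mono (I : NAIdeal) (x y : ℕ → ℝ) (h : ∀ k, x k ≤ y k) :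
    Iliminf I x ≤ Iliminf I y := by
  apply sInf_le_sInf
  rintro v ⟨a, ha, rfl⟩
  refine ⟨a, ?_, rfl⟩
  intro hIn
  exact ha (I.downward _ hIn _ fun k hk => lt_of_le_of_lt (h k) hk)

lemma ratio_mono {E F : Set ℝ} (h : E ⊆ F) (J : ℕ → Set ℝ) (n : ℕ) :
    ratioSeq E J n ≤ ratioSeq F J n := by
  unfold ratioSeq
  rcases eq_or_ne (volume (J n)) ∞ with hv | hv
  · simp [hv]
  · gcongr
    exact ne_top_of_le_ne_top hv (measure_mono inter_subset_left)

-- key pointwise inequality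
lemma key_ineq {A B : Set ℝ} (hB : MeasurableSet B) (J : Set ℝ) (hJ : MeasurableSet J)
    (h0 : volume J ≠ 0) (hfin : volume J ≠ ∞) :
    (volume (J ∩ A)).toReal / (volume J).toReal + (volume (J ∩ B)).toReal / (volume J).toReal - 1
      ≤ (volume (J ∩ (A ∩ B))).toReal / (volume J).toReal := by
  have hd : 0 < (volume J).toReal := ENNReal.toReal_pos h0 hfin
  have hinter : (J ∩ A) ∩ (J ∩ B) = J ∩ (A ∩ B) := by
    ext x; simp only [mem_inter_iff]; tauto
  have h1 : volume (J ∩ A) + volume (J ∩ B) ≤ volume J + volume (J ∩ (A ∩ B)) := by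
    rw [← measure_union_add_inter (J ∩ A) (hJ.inter hB), hinter]
    exact add_le_add (measure_mono (union_subset inter_subset_left inter_subset_left)) le_rfl
  have hAfin : volume (J ∩ A) ≠ ∞ := ne_top_of_le_ne_top hfin (measure_mono inter_subset_left)
  have hBfin : volume (J ∩ B) ≠ ∞ := ne_top_of_le_ne_top hfin (measure_mono inter_subset_left)
  have hCfin : volume (J ∩ (A ∩ B)) ≠ ∞ := ne_top_of_le_ne_top hfin (measure_mono inter_subset_left)
  have h2 : (volume (J ∩ A)).toReal + (volume (J ∩ B)).toReal
      ≤ (volume J).toReal + (volume (J ∩ (A ∩ B))).toReal := by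
    rw [← ENNReal.toReal_add hAfin hBfin, ← ENNReal.toReal_add hfin hCfin]
    exact ENNReal.toReal_mono (by finiteness) h1
  have h3 : ((volume (J ∩ A)).toReal + (volume (J ∩ B)).toReal) / (volume J).toReal
      ≤ ((volume J).toReal + (volume (J ∩ (A ∩ B))).toReal) / (volume J).toReal := by
    gcongr
  rw [add_div, add_div, div_self hd.ne'] at h3
  linarith

lemma exists_admSeq (I : NAIdeal) (p : ℝ) : ∃ J : ℕ → Set ℝ, AboutP p J ∧ AdmSeq I J := by
  refine ⟨fun n => Icc p (p + 1 / (2 * ((n : ℝ) + 1))), ?_, ?_⟩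
  · intro n
    refine ⟨?_, p, p + 1 / (2 * ((n : ℝ) + 1)), rfl⟩
    constructor
    · exact le_refl p
    · have : (0:ℝ) < 1 / (2 * ((n : ℝ) + 1)) := by positivity
      linarith
  · have hset : {n : ℕ | 0 < volume (Icc p (p + 1 / (2 * ((n : ℝ) + 1))))
        ∧ volume (Icc p (p + 1 / (2 * ((n : ℝ) + 1)))) < 1 / (n : ℝ≥0∞)} = univ := by
      apply eq_univ_of_forall
      intro n
      have hpos : (0:ℝ) < 1 / (2 * ((n : ℝ) + 1)) := by positivity
      have hv : volume (Icc p (p + 1 / (2 * ((n : ℝ) + 1))))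
          = ENNReal.ofReal (1 / (2 * ((n : ℝ) + 1))) := by
        rw [Real.volume_Icc]; ring_nf
      constructor
      · rw [hv]; exact ENNReal.ofReal_pos.mpr hpos
      · rw [hv]
        rcases Nat.eq_zero_or_pos n with h0 | hn
        · subst h0; simp
        · have hn' : (0:ℝ) < (n:ℝ) := by exact_mod_cast hn
          have : (1 : ℝ≥0∞) / (n : ℝ≥0∞) = ENNReal.ofReal (1 / (n:ℝ)) := by
            rw [ENNReal.ofReal_div_of_pos hn']
            simp
          rw [this]
          apply ENNReal.ofReal_lt_ofReal_iff_of_nonneg hpos.le |>.mpr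
          rw [div_lt_div_iff₀ (by positivity) hn']
          nlinarith
    unfold AdmSeq
    rw [hset, compl_univ]
    exact I.empty_mem

lemma mem_Theta_iff (I : NAIdeal) (p : ℝ) (E : Set ℝ) :
    p ∈ Theta I E ↔ ∀ J : ℕ → Set ℝ, AboutP p J → AdmSeq I J →
      Iliminf I (ratioSeq E J) = 1 := by
  constructor
  · intro h J hJ1 hJ2
    have hle : Iliminf I (ratioSeq E J) ≤ 1 := Iliminf_le_one I _ (ratio_le_one E J)
    have hge : (1:EReal) ≤ Iliminf I (ratioSeq E J) := by
      have : lowerIDensity I p E ≤ Iliminf I (ratioSeq E J) := sInf_le ⟨J, hJ1, hJ2, rfl⟩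
      rw [h] at this; exact this
    exact le_antisymm hle hge
  · intro h
    obtain ⟨J, hJ1, hJ2⟩ := exists_admSeq I p
    apply le_antisymm
    · calc lowerIDensity I p E ≤ Iliminf I (ratioSeq E J) := sInf_le ⟨J, hJ1, hJ2, rfl⟩
        _ = 1 := h J hJ1 hJ2
    · apply le_sInf
      rintro v ⟨J', hJ1', hJ2', rfl⟩
      exact (h J' hJ1' hJ2').ge

/-- Θ_I(A ∩ B) = Θ_I(A) ∩ Θ_I(B). -/
theorem stmt11 (I : NAIdeal) (A B : Set ℝ) (hA : MeasurableSet A) (hB : MeasurableSet B) :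
    Theta I (A ∩ B) = Theta I A ∩ Theta I B := by
  ext p
  simp only [Set.mem_inter_iff, mem_Theta_iff]
  constructor
  · intro h
    constructor <;> intro J hJ1 hJ2 <;> refine le_antisymm (Iliminf_le_one I _ (ratio_le_one _ J)) ?_
    · calc (1:EReal) = Iliminf I (ratioSeq (A ∩ B) J) := (h J hJ1 hJ2).symm
        _ ≤ Iliminf I (ratioSeq A J) :=
          Iliminf_mono I _ _ fun n => ratio_mono inter_subset_left J n
    · calc (1:EReal) = Iliminf I (ratioSeq (A ∩ B) J) := (h J hJ1 hJ2).symm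
        _ ≤ Iliminf I (ratioSeq B J) :=
          Iliminf_mono I _ _ fun n => ratio_mono inter_subset_right J n
  · rintro ⟨h1, h2⟩ J hJ1 hJ2
    refine le_antisymm (Iliminf_le_one I _ (ratio_le_one _ J)) ?_
    apply one_le_Iliminf
    intro a ha
    set b : ℝ := (1 + a) / 2 with hbdef
    have hb : b < 1 := by rw [hbdef]; linarith
    have hGA := small_mem_of_Iliminf_eq_one I _ (h1 J hJ1 hJ2) hb
    have hGB := small_mem_of_Iliminf_eq_one I _ (h2 J hJ1 hJ2) hb
    have hbig : {k | ratioSeq A J k < b} ∪ ({k | ratioSeq B J k < b}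
        ∪ {n : ℕ | 0 < volume (J n) ∧ volume (J n) < 1 / (n : ℝ≥0∞)}ᶜ) ∈ I.carrier :=
      I.unionMem _ hGA _ (I.unionMem _ hGB _ hJ2)
    apply I.downward _ hbig
    intro k hk
    by_contra hcon
    simp only [mem_union, mem_setOf_eq, not_or, not_lt, mem_compl_iff, not_not] at hcon
    obtain ⟨hxa, hyb, hcc⟩ := hcon
    obtain ⟨-, a', b', hab⟩ := hJ1 k
    have hJm : MeasurableSet (J k) := hab ▸ measurableSet_Icc
    have key : ratioSeq A J k + ratioSeq B J k - 1 ≤ ratioSeq (A ∩ B) J k :=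
      key_ineq hB (J k) hJm hcc.1.ne' (hcc.2.trans_le le_top).ne
    have hk' : ratioSeq (A ∩ B) J k < a := hk
    have : 2 * b - 1 = a := by rw [hbdef]; ring
    linarith
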